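/- Let G = (V, E) be a finite digraph with real bounds 0 < l(e) ≤ u(e) on each edge, and let f : E → ℤ be a flow assignment with ⌈l(e)⌉ ≤ f(e) ≤ ⌊u(e)⌋ for every edge e. Let S ⊆ V be a set of nodes such that f(e) = ⌈l(e)⌉ for every edge e ∈ E⁻_S (edges entering S) and f(e) = ⌊u(e)⌋ for every edge e ∈ E⁺_S (edges leaving S). If Σ_{v_j ∈ S} b_j > 0, then Σ_{e ∈ E⁻_S} ⌈l(e)⌉ > Σ_{e ∈ E⁺_S} ⌊u(e)⌋; that is, the integer circulation condition fails for the set S. -/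
import Mathlib


/-- If the flows on all edges entering a set `S` are at their integer lower
limits, the flows on all edges leaving `S` are at their integer upper limits,
and the balances of the nodes of `S` sum to a positive quantity, then the
integer circulation condition fails for `S`. -/
theorem stmt_7 {V : Type*} [Fintype V] [DecidableEq V]
    (E : Finset (V × V)) (hE : ∀ e ∈ E, e.1 ≠ e.2)
    (l u : V × V → ℝ)
    (hl : ∀ e ∈ E, 0 < l e) (hlu : ∀ e ∈ E, l e ≤ u e)
    (f : V × V → ℤ)
    (hf : ∀ e ∈ E, ⌈l e⌉ ≤ f e ∧ f e ≤ ⌊u e⌋)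
    (S : Finset V)
    (hin : ∀ e ∈ E, e.1 ∈ S → e.2 ∉ S → f e = ⌈l e⌉)
    (hout : ∀ e ∈ E, e.2 ∈ S → e.1 ∉ S → f e = ⌊u e⌋)
    (hpos : 0 < ∑ j ∈ S,
      (∑ e ∈ E.filter (fun e => e.1 = j), f e
        - ∑ e ∈ E.filter (fun e => e.2 = j), f e)) :
    ∑ e ∈ E.filter (fun e => e.2 ∈ S ∧ e.1 ∉ S), ⌊u e⌋
      < ∑ e ∈ E.filter (fun e => e.1 ∈ S ∧ e.2 ∉ S), ⌈l e⌉ := by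
  have h1 : ∑ e ∈ E.filter (fun e => e.1 ∈ S ∧ e.2 ∉ S), ⌈l e⌉
      = ∑ e ∈ E.filter (fun e => e.1 ∈ S ∧ e.2 ∉ S), f e := by
    refine Finset.sum_congr rfl fun e he => ?_
    rw [Finset.mem_filter] at he
    exact (hin e he.1 he.2.1 he.2.2).symm
  have h2 : ∑ e ∈ E.filter (fun e => e.2 ∈ S ∧ e.1 ∉ S), ⌊u e⌋
      = ∑ e ∈ E.filter (fun e => e.2 ∈ S ∧ e.1 ∉ S), f e := by
    refine Finset.sum_congr rfl fun e he => ?_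
    rw [Finset.mem_filter] at he
    exact (hout e he.1 he.2.1 he.2.2).symm
  rw [h1, h2]
  have key : ∑ j ∈ S,
      (∑ e ∈ E.filter (fun e => e.1 = j), f e
        - ∑ e ∈ E.filter (fun e => e.2 = j), f e)
      = ∑ e ∈ E.filter (fun e => e.1 ∈ S ∧ e.2 ∉ S), f e
        - ∑ e ∈ E.filter (fun e => e.2 ∈ S ∧ e.1 ∉ S), f e := by
    rw [Finset.sum_sub_distrib]
    have hA : ∑ j ∈ S, ∑ e ∈ E.filter (fun e => e.1 = j), f e
        = ∑ e ∈ E, (if e.1 ∈ S then f e else 0) := by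
      simp only [Finset.sum_filter]
      rw [Finset.sum_comm]
      refine Finset.sum_congr rfl fun e _ => ?_
      simp [eq_comm, Finset.sum_ite_eq]
    have hB : ∑ j ∈ S, ∑ e ∈ E.filter (fun e => e.2 = j), f e
        = ∑ e ∈ E, (if e.2 ∈ S then f e else 0) := by
      simp only [Finset.sum_filter]
      rw [Finset.sum_comm]
      refine Finset.sum_congr rfl fun e _ => ?_
      simp [eq_comm, Finset.sum_ite_eq]
    rw [hA, hB]
    simp only [Finset.sum_filter, ← Finset.sum_sub_distrib]
    refine Finset.sum_congr rfl fun e _ => ?_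
    by_cases h1 : e.1 ∈ S <;> by_cases h2 : e.2 ∈ S <;> simp [h1, h2]
  rw [key] at hpos
  omega
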